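/- If X is a sober, countably based topological space, then the upper Vietoris topology on K(X) coincides with the Scott topology on K(X) ordered by reverse subset inclusion. -/
import Mathlib


open Set Topology

/-- The lower powerspace: closed subsets of `X`. -/
def LowerPS (X : Type*) [TopologicalSpace X] : Type _ := {A : Set X // IsClosed A}

/-- Lower Vietoris topology, generated by the sets `◇U = {A | A ∩ U ≠ ∅}` for `U` open. -/
instance (X : Type*) [TopologicalSpace X] : TopologicalSpace (LowerPS X) :=
  .generateFrom {S | ∃ U : Set X, IsOpen U ∧ S = {A : LowerPS X | (A.1 ∩ U).Nonempty}}

/-- The upper powerspace: compact saturated subsets of `X`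
(saturated = intersection of all open neighborhoods). -/
def UpperPS (X : Type*) [TopologicalSpace X] : Type _ :=
  {K : Set X // IsCompact K ∧ K = ⋂₀ {U : Set X | IsOpen U ∧ K ⊆ U}}

/-- Upper Vietoris topology, generated by the sets `□U = {K | K ⊆ U}` for `U` open. -/
instance (X : Type*) [TopologicalSpace X] : TopologicalSpace (UpperPS X) :=
  .generateFrom {S | ∃ U : Set X, IsOpen U ∧ S = {K : UpperPS X | K.1 ⊆ U}}

/-- A `Π⁰₂` subset. -/
def IsPi02 {Y : Type*} [TopologicalSpace Y] (S : Set Y) : Prop :=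
  ∃ U V : ℕ → Set Y, (∀ i, IsOpen (U i)) ∧ (∀ i, IsOpen (V i)) ∧
    ∀ y, y ∈ S ↔ ∀ i, y ∈ U i → y ∈ V i

/-- The Scott topology on `P(ω)`, generated by the sets `{x | F ⊆ x}` for finite `F`. -/
instance : TopologicalSpace (Set ℕ) :=
  .generateFrom {S | ∃ F : Finset ℕ, S = {x : Set ℕ | ↑F ⊆ x}}

/-- A space is quasi-Polish iff it is homeomorphic to a `Π⁰₂` subspace of `P(ω)`
with the Scott topology. -/
def QuasiPolish (X : Type*) [TopologicalSpace X] : Prop :=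
  ∃ S : Set (Set ℕ), IsPi02 S ∧ Nonempty (X ≃ₜ S)

/-- Scott-open subsets of a preorder. -/
def IsScottOpen {α : Type*} [Preorder α] (U : Set α) : Prop :=
  (∀ ⦃a b : α⦄, a ≤ b → a ∈ U → b ∈ U) ∧
  ∀ d : Set α, d.Nonempty → DirectedOn (· ≤ ·) d → ∀ a : α, IsLUB d a → a ∈ U →
    (d ∩ U).Nonempty

/-- The Scott topology on a preorder. -/
def scottTop (α : Type*) [Preorder α] : TopologicalSpace α := .generateFrom {U | IsScottOpen U}

/-- The frame of open subsets of `X`, ordered by inclusion. -/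
def OpensT (X : Type*) [TopologicalSpace X] : Type _ := {U : Set X // IsOpen U}

instance (X : Type*) [TopologicalSpace X] : PartialOrder (OpensT X) :=
  inferInstanceAs (PartialOrder {U : Set X // IsOpen U})

/-- `O(X)` carries the Scott topology. -/
instance (X : Type*) [TopologicalSpace X] : TopologicalSpace (OpensT X) := scottTop (OpensT X)

/-- `□◇U` in `K(A(X))`. -/
def boxDia {X : Type*} [TopologicalSpace X] (U : Set X) : Set (UpperPS (LowerPS X)) :=
  {𝒦 | ∀ A ∈ 𝒦.1, ((A : LowerPS X).1 ∩ U).Nonempty}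

/-- `◇□U` in `A(K(X))`. -/
def diaBox {X : Type*} [TopologicalSpace X] (U : Set X) : Set (LowerPS (UpperPS X)) :=
  {𝒜 | ∃ K ∈ 𝒜.1, (K : UpperPS X).1 ⊆ U}

/-- A space is consonant iff every Scott-open family of opens containing `U` contains
a compact-saturated filter neighborhood `▽K` of `U`. -/
def Consonant (X : Type*) [TopologicalSpace X] : Prop :=
  ∀ H : Set (OpensT X), IsScottOpen H → ∀ U ∈ H,
    ∃ K : UpperPS X, K.1 ⊆ U.1 ∧ ∀ V : OpensT X, K.1 ⊆ V.1 → V ∈ H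

/-- A space is co-consonant. -/
def CoConsonant (Y : Type*) [TopologicalSpace Y] : Prop :=
  ∀ H : Set (OpensT Y), IsScottOpen H → ∀ U ∈ H,
    ∃ F : Finset (Set Y), (∀ A ∈ F, IsClosed A) ∧ (∀ A ∈ F, (U.1 ∩ A).Nonempty) ∧
      ∀ V : OpensT Y, (∀ A ∈ F, (V.1 ∩ A).Nonempty) → V ∈ H


/-- `K(X)` ordered by reverse inclusion. -/
instance (X : Type*) [TopologicalSpace X] : PartialOrder (UpperPS X) where
  le K K' := K'.1 ⊆ K.1
  le_refl _ := subset_rfl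
  le_trans _ _ _ h h' := fun x hx => h (h' hx)
  le_antisymm _ _ h h' := Subtype.ext (h'.antisymm h)

namespace UpperPSAux

variable {X : Type*} [TopologicalSpace X]

/-- Saturation of a set. -/
def sat (S : Set X) : Set X := ⋂₀ {U : Set X | IsOpen U ∧ S ⊆ U}

lemma subset_sat {S : Set X} : S ⊆ sat S := fun _ hx U hU => hU.2 hx

lemma sat_subset {S U : Set X} (hU : IsOpen U) (h : S ⊆ U) : sat S ⊆ U :=
  fun _ hx => hx U ⟨hU, h⟩

lemma sat_mono {S T : Set X} (h : S ⊆ T) : sat S ⊆ sat T :=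
  fun x hx U hU => hx U ⟨hU.1, h.trans hU.2⟩

lemma sat_sat (S : Set X) : sat S = ⋂₀ {U : Set X | IsOpen U ∧ sat S ⊆ U} := by
  apply subset_antisymm
  · intro x hx U hU
    exact hx U ⟨hU.1, subset_sat.trans hU.2⟩
  · intro x hx V hV
    exact hx V ⟨hV.1, sat_subset hV.1 hV.2⟩

lemma mem_upper_iff (K : UpperPS X) (x : X) :
    x ∈ K.1 ↔ ∀ U : Set X, IsOpen U → K.1 ⊆ U → x ∈ U := by
  constructor
  · intro hx U _ hsub; exact hsub hx
  · intro h
    conv_lhs => rw [K.2.2]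
    intro U hU
    exact h U hU.1 hU.2

lemma le_iff (K K' : UpperPS X) : K ≤ K' ↔ K'.1 ⊆ K.1 := Iff.rfl

/-- Well-filteredness from sobriety. -/
lemma wellFiltered [QuasiSober X] (d : Set (UpperPS X)) (hne : d.Nonempty)
    (hdir : DirectedOn (· ≤ ·) d) (U : Set X) (hU : IsOpen U)
    (hsub : (⋂ K ∈ d, (K : UpperPS X).1) ⊆ U) : ∃ K ∈ d, K.1 ⊆ U := by
  by_contra hcon
  push_neg at hcon
  set F : Set (Set X) := {C | IsClosed C ∧ C ⊆ Uᶜ ∧ ∀ K ∈ d, (K.1 ∩ C).Nonempty} with hF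
  have hUc : Uᶜ ∈ F := by
    refine ⟨hU.isClosed_compl, subset_rfl, fun K hK => ?_⟩
    obtain ⟨x, hx1, hx2⟩ := Set.not_subset.1 (hcon K hK)
    exact ⟨x, hx1, hx2⟩
  -- Zorn to get a minimal element of F
  obtain ⟨C, -, hCF, hCmin⟩ : ∃ C, C ⊆ Uᶜ ∧ Minimal (· ∈ F) C := by
    obtain ⟨C, h1, h2⟩ := zorn_superset_nonempty F (fun c hcF hchain hcne => by
      refine ⟨⋂₀ c, ⟨isClosed_sInter fun s hs => (hcF hs).1, ?_, ?_⟩,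
        fun s hs => Set.sInter_subset_of_mem hs⟩
      · obtain ⟨s, hs⟩ := hcne
        exact (Set.sInter_subset_of_mem hs).trans (hcF hs).2.1
      · intro K hK
        rw [Set.sInter_eq_iInter]
        refine K.2.1.inter_iInter_nonempty (fun s : c => (s : Set X))
          (fun s => (hcF s.2).1) (fun t => ?_)
        rcases t.eq_empty_or_nonempty with rfl | htne
        · simp only [Finset.notMem_empty, Set.iInter_of_empty, Set.iInter_univ,
            Set.iInter_false, Set.inter_univ]
          exact ((hcF hcne.choose_spec).2.2 K hK).mono Set.inter_subset_left
        · -- a finite nonempty subfamily of a chain has a least element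
          have : ∃ s ∈ t, ∀ s' ∈ t, (s : Set X) ⊆ s' := by
            classical
            induction t using Finset.induction_on with
            | empty => exact absurd rfl htne.ne_empty
            | @insert a t hat ih =>
              rcases t.eq_empty_or_nonempty with rfl | htne'
              · exact ⟨a, Finset.mem_insert_self _ _, by simp⟩
              · obtain ⟨s, hst, hsmin⟩ := ih htne'
                rcases hchain.total a.2 s.2 with h | h
                · exact ⟨a, Finset.mem_insert_self _ _, fun s' hs' => by
                    rcases Finset.mem_insert.1 hs' with rfl | hs'
                    · exact subset_rfl
                    · exact h.trans (hsmin s' hs')⟩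
                · exact ⟨s, Finset.mem_insert_of_mem hst, fun s' hs' => by
                    rcases Finset.mem_insert.1 hs' with rfl | hs'
                    · exact h
                    · exact hsmin s' hs'⟩
          obtain ⟨s, hst, hsmin⟩ := this
          obtain ⟨x, hx1, hx2⟩ := (hcF s.2).2.2 K hK
          exact ⟨x, hx1, Set.mem_iInter₂.2 fun s' hs' => hsmin s' hs' hx2⟩) Uᶜ hUc
    exact ⟨C, h1, h2⟩
  -- C is irreducible
  have hCne : C.Nonempty := by
    obtain ⟨K, hK⟩ := hne
    exact (hCF.2.2 K hK).mono (Set.inter_subset_right)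
  have hCirr : IsIrreducible C := by
    refine ⟨hCne, fun u v hu hv hCu hCv => ?_⟩
    by_contra hemp
    rw [Set.not_nonempty_iff_eq_empty] at hemp
    have key : C \ u ∈ F ∨ C \ v ∈ F := by
      by_contra hkey
      push_neg at hkey
      have h1 : ∃ Ka ∈ d, (Ka.1 ∩ (C \ u)) = ∅ := by
        by_contra h'
        push_neg at h'
        exact hkey.1 ⟨hCF.1.sdiff hu, (Set.diff_subset).trans hCF.2.1,
          fun K hK => h' K hK⟩
      have h2 : ∃ Kb ∈ d, (Kb.1 ∩ (C \ v)) = ∅ := by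
        by_contra h'
        push_neg at h'
        exact hkey.2 ⟨hCF.1.sdiff hv, (Set.diff_subset).trans hCF.2.1,
          fun K hK => h' K hK⟩
      obtain ⟨Ka, hKa, hKa'⟩ := h1
      obtain ⟨Kb, hKb, hKb'⟩ := h2
      obtain ⟨Kc, hKc, hca, hcb⟩ := hdir Ka hKa Kb hKb
      obtain ⟨x, hxK, hxC⟩ := hCF.2.2 Kc hKc
      have hxu : x ∈ u := by
        by_contra hxu
        exact absurd hKa' (Set.nonempty_iff_ne_empty.1 ⟨x, hca hxK, hxC, hxu⟩)
      have hxv : x ∈ v := by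
        by_contra hxv
        exact absurd hKb' (Set.nonempty_iff_ne_empty.1 ⟨x, hcb hxK, hxC, hxv⟩)
      exact absurd hemp (Set.nonempty_iff_ne_empty.1 ⟨x, hxC, hxu, hxv⟩)
    rcases key with h | h
    · obtain ⟨x, hxC, hxu⟩ := hCu
      exact (hCmin h Set.diff_subset hxC).2 hxu
    · obtain ⟨x, hxC, hxv⟩ := hCv
      exact (hCmin h Set.diff_subset hxC).2 hxv
  obtain ⟨x, hx⟩ := QuasiSober.sober hCirr hCF.1
  have hxC : x ∈ C := hx ▸ subset_closure rfl
  have hxK : ∀ K ∈ d, x ∈ K.1 := by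
    intro K hK
    rw [mem_upper_iff]
    intro V hV hKV
    obtain ⟨y, hyK, hyC⟩ := hCF.2.2 K hK
    have hy : y ∈ closure ({x} : Set X) := hx ▸ hyC
    obtain ⟨z, hz1, hz2⟩ := (mem_closure_iff.1 hy) V hV (hKV hyK)
    rwa [show z = x from hz2] at hz1
  have : x ∈ U := hsub (Set.mem_iInter₂.2 hxK)
  exact (hCF.2.1 hxC) this

/-- `□U` is Scott open when `X` is sober. -/
lemma box_scottOpen [QuasiSober X] {U : Set X} (hU : IsOpen U) :
    IsScottOpen {K : UpperPS X | K.1 ⊆ U} := by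
  constructor
  · intro a b hab ha
    exact Set.Subset.trans hab ha
  · intro d hne hdir a hlub ha
    set I : Set X := ⋂ K ∈ d, (K : UpperPS X).1 with hI
    have hIsat : I = ⋂₀ {V : Set X | IsOpen V ∧ I ⊆ V} := by
      apply subset_antisymm
      · exact fun x hx V hV => hV.2 hx
      · intro x hx
        refine Set.mem_iInter₂.2 fun K hK => ?_
        rw [mem_upper_iff]
        intro V hV hKV
        exact hx V ⟨hV, (Set.biInter_subset_of_mem hK).trans hKV⟩
    have hIcomp : IsCompact I := by
      rw [isCompact_iff_finite_subcover]
      intro ι Uo hUo hcov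
      obtain ⟨K, hKd, hKU⟩ := wellFiltered d hne hdir (⋃ i, Uo i) (isOpen_iUnion hUo) hcov
      obtain ⟨t, ht⟩ := K.2.1.elim_finite_subcover Uo hUo hKU
      exact ⟨t, (Set.biInter_subset_of_mem hKd).trans ht⟩
    set Q : UpperPS X := ⟨I, hIcomp, hIsat⟩ with hQ
    have hQub : Q ∈ upperBounds d := fun K hK => Set.biInter_subset_of_mem hK
    have haQ : I ⊆ a.1 := hlub.2 hQub
    obtain ⟨K, hKd, hKU⟩ := wellFiltered d hne hdir U hU (haQ.trans ha)
    exact ⟨K, hKd, hKU⟩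


/-- A compact set in a second countable space has a countable decreasing
neighborhood basis of opens. -/
lemma exists_nbhd_basis [SecondCountableTopology X] (K : Set X) (hK : IsCompact K) :
    ∃ W : ℕ → Set X, (∀ n, IsOpen (W n)) ∧ (∀ n, K ⊆ W n) ∧ Antitone W ∧
      ∀ U : Set X, IsOpen U → K ⊆ U → ∃ n, W n ⊆ U := by
  classical
  set B := TopologicalSpace.countableBasis X with hB
  set T : Set (Set X) :=
    (fun t => ⋃₀ t) '' {t : Set (Set X) | t.Finite ∧ t ⊆ B} with hT
  have hTc : T.Countable :=
    (Set.countable_setOf_finite_subset (TopologicalSpace.countable_countableBasis X)).image _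
  have hTopen : ∀ s ∈ T, IsOpen s := by
    rintro s ⟨t, ⟨-, htB⟩, rfl⟩
    exact isOpen_sUnion fun u hu => TopologicalSpace.isOpen_of_mem_countableBasis (htB hu)
  have hTex : ∀ U : Set X, IsOpen U → K ⊆ U → ∃ s ∈ T, K ⊆ s ∧ s ⊆ U := by
    intro U hU hKU
    have hcov : K ⊆ ⋃ b : {b // b ∈ B ∧ b ⊆ U}, (b : Set X) := by
      intro x hx
      obtain ⟨b, hbB, hxb, hbU⟩ :=
        (TopologicalSpace.isBasis_countableBasis X).exists_subset_of_mem_open (hKU hx) hU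
      exact Set.mem_iUnion.2 ⟨⟨b, hbB, hbU⟩, hxb⟩
    obtain ⟨t, ht⟩ := hK.elim_finite_subcover (fun b : {b // b ∈ B ∧ b ⊆ U} => (b : Set X))
      (fun b => TopologicalSpace.isOpen_of_mem_countableBasis b.2.1) hcov
    refine ⟨⋃₀ ((fun b : {b // b ∈ B ∧ b ⊆ U} => (b : Set X)) '' ↑t),
      ⟨_, ⟨t.finite_toSet.image _, ?_⟩, rfl⟩, ?_, ?_⟩
    · rintro s ⟨b, -, rfl⟩; exact b.2.1
    · intro x hx
      obtain ⟨b, hbt, hxb⟩ := Set.mem_iUnion₂.1 (ht hx)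
      exact ⟨b, ⟨b, hbt, rfl⟩, hxb⟩
    · rintro x ⟨s, ⟨b, -, rfl⟩, hxs⟩
      exact b.2.2 hxs
  have hT'ne : {s | s ∈ T ∧ K ⊆ s}.Nonempty := by
    obtain ⟨s, hsT, hKs, -⟩ := hTex Set.univ isOpen_univ (Set.subset_univ K)
    exact ⟨s, hsT, hKs⟩
  obtain ⟨f, hf⟩ := (hTc.mono (fun s hs => hs.1 : {s | s ∈ T ∧ K ⊆ s} ⊆ T)).exists_surjective hT'ne
  refine ⟨fun n => ⋂ m ∈ Finset.range (n+1), (f m : Set X), ?_, ?_, ?_, ?_⟩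
  · intro n
    exact isOpen_biInter_finset fun m _ => hTopen _ (f m).2.1
  · intro n
    exact Set.subset_iInter₂ fun m _ => (f m).2.2
  · apply antitone_nat_of_succ_le
    intro n x hx
    exact Set.mem_iInter₂.2 fun m hm =>
      Set.mem_iInter₂.1 hx m (Finset.mem_range.2 (Nat.lt_succ_of_lt (Finset.mem_range.1 hm)))
  · intro U hU hKU
    obtain ⟨s, hsT, hKs, hsU⟩ := hTex U hU hKU
    obtain ⟨n, hn⟩ := hf ⟨s, hsT, hKs⟩
    refine ⟨n, fun x hx => hsU ?_⟩
    have := Set.mem_iInter₂.1 hx n (Finset.mem_range.2 (Nat.lt_succ_self n))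
    rwa [hn] at this

/-- Every Scott-open subset of `K(X)` is upper-Vietoris open, for second countable `X`. -/
lemma scott_isOpen [SecondCountableTopology X] {𝒰 : Set (UpperPS X)} (h : IsScottOpen 𝒰) :
    IsOpen 𝒰 := by
  classical
  rw [isOpen_iff_forall_mem_open]
  intro K hK𝒰
  obtain ⟨W, hWopen, hWK, hWanti, hWbasis⟩ := exists_nbhd_basis K.1 K.2.1
  by_cases hex : ∃ n, {L : UpperPS X | L.1 ⊆ W n} ⊆ 𝒰
  · obtain ⟨n, hn⟩ := hex
    exact ⟨_, hn, TopologicalSpace.isOpen_generateFrom_of_mem ⟨W n, hWopen n, rfl⟩, hWK n⟩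
  · exfalso
    push_neg at hex
    have hKn' : ∀ n, ∃ L : UpperPS X, L.1 ⊆ W n ∧ L ∉ 𝒰 := by
      intro n
      obtain ⟨L, hL1, hL2⟩ := Set.not_subset.1 (hex n)
      exact ⟨L, hL1, hL2⟩
    choose Kn hKn1 hKn2 using hKn'
    set S : ℕ → Set X := fun n => K.1 ∪ ⋃ m, ⋃ (_ : n ≤ m), (Kn m).1 with hS
    have hKnS : ∀ m n, n ≤ m → (Kn m).1 ⊆ S n := by
      intro m n hnm x hx
      exact Or.inr (Set.mem_iUnion₂.2 ⟨m, hnm, hx⟩)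
    have hSW : ∀ n, S n ⊆ W n := by
      intro n
      apply Set.union_subset (hWK n)
      exact Set.iUnion₂_subset fun m hm => (hKn1 m).trans (hWanti hm)
    have hScomp : ∀ n, IsCompact (sat (S n)) := by
      intro n
      rw [isCompact_iff_finite_subcover]
      intro ι Uo hUo hcov
      have hmono : ∀ a b : Finset ι, a ⊆ b → (⋃ i ∈ a, Uo i) ⊆ ⋃ i ∈ b, Uo i := by
        intro a b hab x hx
        obtain ⟨i, hi, hxi⟩ := Set.mem_iUnion₂.1 hx
        exact Set.mem_iUnion₂.2 ⟨i, hab hi, hxi⟩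
      have hScov : S n ⊆ ⋃ i, Uo i := subset_sat.trans hcov
      obtain ⟨t0, ht0⟩ := K.2.1.elim_finite_subcover Uo hUo
        (Set.subset_union_left.trans hScov)
      obtain ⟨N, hN⟩ := hWbasis (⋃ i ∈ t0, Uo i) (isOpen_biUnion fun i _ => hUo i) ht0
      have hm : ∀ m, ∃ t : Finset ι, n ≤ m → (Kn m).1 ⊆ ⋃ i ∈ t, Uo i := by
        intro m
        by_cases hnm : n ≤ m
        · obtain ⟨t, ht⟩ := (Kn m).2.1.elim_finite_subcover Uo hUo
            ((hKnS m n hnm).trans hScov)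
          exact ⟨t, fun _ => ht⟩
        · exact ⟨∅, fun hc => absurd hc hnm⟩
      choose tm htm using hm
      refine ⟨t0 ∪ (Finset.range N).biUnion tm, ?_⟩
      apply sat_subset (isOpen_biUnion fun i _ => hUo i)
      apply Set.union_subset
      · exact ht0.trans (hmono _ _ Finset.subset_union_left)
      · refine Set.iUnion₂_subset fun m hm' => ?_
        by_cases hmN : m < N
        · exact (htm m hm').trans (hmono _ _ ((Finset.subset_biUnion_of_mem tm
            (Finset.mem_range.2 hmN)).trans Finset.subset_union_right))
        · have h1 : (Kn m).1 ⊆ W N := (hKn1 m).trans (hWanti (le_of_not_gt hmN))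
          exact (h1.trans hN).trans (hmono _ _ Finset.subset_union_left)
    set CK : ℕ → UpperPS X := fun n => ⟨sat (S n), hScomp n, sat_sat _⟩ with hCK
    have hCKmono : ∀ m n, m ≤ n → (CK n).1 ⊆ (CK m).1 := by
      intro m n hmn
      apply sat_mono
      apply Set.union_subset Set.subset_union_left
      exact Set.iUnion₂_subset fun k hk => hKnS k m (hmn.trans hk)
    have hdir : DirectedOn (· ≤ ·) (Set.range CK) := by
      rintro _ ⟨a, rfl⟩ _ ⟨b, rfl⟩
      exact ⟨CK (max a b), Set.mem_range_self _,
        hCKmono a _ (le_max_left a b), hCKmono b _ (le_max_right a b)⟩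
    have hlub : IsLUB (Set.range CK) K := by
      constructor
      · rintro _ ⟨n, rfl⟩
        exact show K.1 ⊆ (CK n).1 from Set.subset_union_left.trans subset_sat
      · rintro Q hQ
        show Q.1 ⊆ K.1
        intro x hx
        rw [mem_upper_iff]
        intro U hU hKU
        obtain ⟨n, hn⟩ := hWbasis U hU hKU
        have hQW : Q.1 ⊆ W n :=
          (show Q.1 ⊆ (CK n).1 from hQ (Set.mem_range_self n)).trans
            (sat_subset (hWopen n) (hSW n))
        exact hn (hQW hx)
    obtain ⟨_, ⟨n, rfl⟩, hmem⟩ := h.2 (Set.range CK) ⟨CK 0, Set.mem_range_self 0⟩ hdir K hlub hK𝒰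
    exact hKn2 n (h.1 (show (Kn n).1 ⊆ (CK n).1 from (hKnS n n le_rfl).trans subset_sat) hmem)

end UpperPSAux


/-- If `X` is sober and countably based, the upper Vietoris topology on `K(X)` coincides
with the Scott topology for the reverse-inclusion order. -/
theorem upperVietoris_eq_scott (X : Type*) [TopologicalSpace X]
    [SecondCountableTopology X] [QuasiSober X] [T0Space X] :
    (inferInstance : TopologicalSpace (UpperPS X)) = scottTop (UpperPS X) := by
  apply le_antisymm
  · exact le_generateFrom fun s hs => UpperPSAux.scott_isOpen hs
  · apply le_generateFrom
    rintro s ⟨U, hU, rfl⟩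
    exact TopologicalSpace.isOpen_generateFrom_of_mem (UpperPSAux.box_scottOpen hU)
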